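/- Let $\gamma_1 : [0,1] \to \mathbb{R}^2$ and $\gamma_2 : [2,3] \to \mathbb{R}^2$ be Lipschitz self-distancing curves, with $x_1^+ := \gamma_1(1)$ and $x_2^- := \gamma_2(2)$. Assume: (a) $x_2^- - x_1^+$ lies in the normal cone at $x_1^+$ of the convex hull of $\gamma_1([0,1])$, i.e. $\langle x_2^- - x_1^+, y - x_1^+ \rangle \le 0$ for all $y \in \gamma_1([0,1])$; (b) for almost every $t \in [2,3]$ and every $y \in \gamma_1([0,1])$, $\langle \gamma_2'(t), y - \gamma_2(t) \rangle \le 0$. Then the concatenated curve $\delta : [0,3] \to \mathbb{R}^2$ defined by $\delta(t) = \gamma_1(t)$ for $t \in [0,1]$, $\delta(t) = x_1^+ + (t-1)(x_2^- - x_1^+)$ for $t \in [1,2]$, and $\delta(t) = \gamma_2(t)$ for $t \in [2,3]$, is a self-distancing curve. -/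

import Mathlib

open MeasureTheory Set

private lemma norm_le_norm_of_sq_le_sq {E : Type*} [SeminormedAddGroup E] {u w : E}
    (h : ‖u‖ ^ 2 ≤ ‖w‖ ^ 2) : ‖u‖ ≤ ‖w‖ := by
  nlinarith [norm_nonneg u, norm_nonneg w]

private lemma mono_stitch {f : ℝ → ℝ} {a b c : ℝ} (hab : a ≤ b) (hbc : b ≤ c)
    (h1 : MonotoneOn f (Icc a b)) (h2 : MonotoneOn f (Icc b c)) :
    MonotoneOn f (Icc a c) := by
  intro x hx y hy hxy
  rcases le_total y b with hyb | hby
  · exact h1 ⟨hx.1, hxy.trans hyb⟩ ⟨hy.1, hyb⟩ hxy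
  · rcases le_total x b with hxb | hbx
    · exact le_trans (h1 ⟨hx.1, hxb⟩ ⟨hab, le_refl b⟩ hxb)
        (h2 ⟨le_refl b, hbc⟩ ⟨hby, hy.2⟩ hby)
    · exact h2 ⟨hbx, hx.2⟩ ⟨hbx.trans hxy, hy.2⟩ hxy

/-- FTC-type lemma: a Lipschitz function with a.e. nonnegative derivative on `[a,b]`
is nondecreasing between the endpoints. -/
private lemma ftc_le {f : ℝ → ℝ} {K : NNReal} (hf : LipschitzWith K f) {a b : ℝ} (hab : a ≤ b)
    (hd : ∀ᵐ t ∂(volume.restrict (Icc a b)), 0 ≤ deriv f t) : f a ≤ f b := by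
  have hcont : Continuous f := hf.continuous
  set h : ℕ → ℝ := fun n => (n + 1 : ℝ)⁻¹ with hh
  have hpos : ∀ n, 0 < h n := fun n => by positivity
  have hlim : Filter.Tendsto h Filter.atTop (nhds 0) := by
    simpa [hh, one_div] using tendsto_one_div_add_atTop_nhds_zero_nat (𝕜 := ℝ)
  have slope_lim : ∀ (c : ℝ) (F : ℝ → ℝ) (d : ℝ), HasDerivAt F d c →
      Filter.Tendsto (fun n => (F (c + h n) - F c) / h n) Filter.atTop (nhds d) := by
    intro c F d hF
    have hc : Filter.Tendsto (fun n => c + h n) Filter.atTop (nhdsWithin c {c}ᶜ) := by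
      apply tendsto_nhdsWithin_of_tendsto_nhds_of_eventually_within
      · simpa using Filter.Tendsto.add (tendsto_const_nhds (x := c)) hlim
      · exact Filter.Eventually.of_forall fun n => by
          simp only [Set.mem_compl_iff, Set.mem_singleton_iff]
          intro hcc
          exact absurd (by linarith [hcc] : h n = 0) (hpos n).ne'
    have h2 := (hasDerivAt_iff_tendsto_slope.mp hF).comp hc
    refine h2.congr fun n => ?_
    simp only [Function.comp_apply, slope_def_field]
    rw [show c + h n - c = h n by ring]
  have hint : ∀ u v : ℝ, IntervalIntegrable f volume u v := fun u v =>
    hcont.intervalIntegrable u v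
  have key : ∀ n, (∫ t in a..b, (f (t + h n) - f t) / h n)
      = (∫ t in b..(b + h n), f t) / h n - (∫ t in a..(a + h n), f t) / h n := by
    intro n
    have e1 : (∫ t in a..b, f (t + h n)) = ∫ t in (a + h n)..(b + h n), f t :=
      intervalIntegral.integral_comp_add_right f (h n)
    have e2 : (∫ t in a..b, (f (t + h n) - f t))
        = (∫ t in a..b, f (t + h n)) - ∫ t in a..b, f t :=
      intervalIntegral.integral_sub
        ((hcont.comp (continuous_add_right (h n))).intervalIntegrable _ _) (hint a b)
    have e3 : (∫ t in a..(a + h n), f t) + (∫ t in (a + h n)..(b + h n), f t)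
        = ∫ t in a..(b + h n), f t :=
      intervalIntegral.integral_add_adjacent_intervals (hint _ _) (hint _ _)
    have e4 : (∫ t in a..b, f t) + (∫ t in b..(b + h n), f t) = ∫ t in a..(b + h n), f t :=
      intervalIntegral.integral_add_adjacent_intervals (hint _ _) (hint _ _)
    rw [intervalIntegral.integral_div, e2, e1]
    rw [show (∫ t in (a + h n)..(b + h n), f t) - ∫ t in a..b, f t
        = (∫ t in b..(b + h n), f t) - ∫ t in a..(a + h n), f t by linarith, sub_div]
  have TB : ∀ c : ℝ, Filter.Tendsto (fun n => (∫ t in c..(c + h n), f t) / h n)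
      Filter.atTop (nhds (f c)) := by
    intro c
    have hF : HasDerivAt (fun u => ∫ t in c..u, f t) (f c) c :=
      intervalIntegral.integral_hasDerivAt_right (hint c c)
        (hcont.stronglyMeasurableAtFilter _ _) hcont.continuousAt
    have := slope_lim c (fun u => ∫ t in c..u, f t) (f c) hF
    simpa [intervalIntegral.integral_same] using this
  have T1 : Filter.Tendsto (fun n => ∫ t in a..b, (f (t + h n) - f t) / h n) Filter.atTop
      (nhds (f b - f a)) := by
    simp only [key]
    exact (TB b).sub (TB a)
  have hdiff : ∀ᵐ t ∂(volume : Measure ℝ), DifferentiableAt ℝ f t := hf.ae_differentiableAt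
  have T2 : Filter.Tendsto (fun n => ∫ t in a..b, (f (t + h n) - f t) / h n) Filter.atTop
      (nhds (∫ t in a..b, deriv f t)) := by
    apply intervalIntegral.tendsto_integral_filter_of_dominated_convergence (fun _ => (K : ℝ))
    · exact Filter.Eventually.of_forall fun n =>
        (((hcont.comp (continuous_add_right (h n))).sub hcont).div_const _).aestronglyMeasurable
    · refine Filter.Eventually.of_forall fun n => Filter.Eventually.of_forall fun x _ => ?_
      rw [Real.norm_eq_abs, abs_div, abs_of_pos (hpos n), div_le_iff₀ (hpos n)]
      calc |f (x + h n) - f x| = dist (f (x + h n)) (f x) := by rw [Real.dist_eq]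
        _ ≤ K * dist (x + h n) x := hf.dist_le_mul _ _
        _ = K * h n := by
            rw [Real.dist_eq, show x + h n - x = h n by ring, abs_of_pos (hpos n)]
    · exact intervalIntegrable_const
    · filter_upwards [hdiff] with x hx _
      exact slope_lim x f (deriv f x) hx.hasDerivAt
  have heq : f b - f a = ∫ t in a..b, deriv f t := tendsto_nhds_unique T1 T2
  have hnn : 0 ≤ ∫ t in a..b, deriv f t := by
    rw [intervalIntegral.integral_of_le hab]
    apply MeasureTheory.integral_nonneg_of_ae
    filter_upwards [ae_restrict_of_ae_restrict_of_subset Ioc_subset_Icc_self hd] with t ht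
    exact ht
  linarith

/-- Monotonicity of the distance to a fixed point along `γ` on `[2,3]`,
given the a.e. normal-cone condition. -/
private lemma lemA {γ : ℝ → EuclideanSpace ℝ (Fin 2)} {L : NNReal} (h₂ : LipschitzWith L γ)
    (p : EuclideanSpace ℝ (Fin 2))
    (hb' : ∀ᵐ t ∂(volume.restrict (Icc (2:ℝ) 3)), (0:ℝ) ≤ inner ℝ (deriv γ t) (γ t - p)) :
    ∀ x ∈ Icc (2:ℝ) 3, ∀ y ∈ Icc (2:ℝ) 3, x ≤ y → ‖γ x - p‖ ≤ ‖γ y - p‖ := by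
  set c : ℝ → ℝ := fun t => max 2 (min t 3) with hc
  have hclip : LipschitzWith 1 c := (LipschitzWith.id.min_const 3).const_max 2
  have hcmem : ∀ t, c t ∈ Icc (2:ℝ) 3 := fun t =>
    ⟨le_max_left _ _, max_le (by norm_num) (min_le_right _ _)⟩
  have hcid : ∀ t ∈ Icc (2:ℝ) 3, c t = t := fun t ht => by
    rw [hc]; simp only; rw [min_eq_left ht.2, max_eq_right ht.1]
  set G : ℝ → ℝ := fun t => ‖γ (c t) - p‖ ^ 2 with hG
  set M : ℝ := ‖γ 2 - p‖ + L with hM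
  have hM0 : 0 ≤ M := by positivity
  have hbound : ∀ t, ‖γ (c t) - p‖ ≤ M := by
    intro t
    have h1 : ‖γ (c t) - p‖ ≤ ‖γ 2 - p‖ + ‖γ (c t) - γ 2‖ := by
      have e : γ (c t) - p = (γ 2 - p) + (γ (c t) - γ 2) := by abel
      rw [e]; exact norm_add_le _ _
    have h2 : ‖γ (c t) - γ 2‖ ≤ L * |c t - 2| := by
      have := h₂.dist_le_mul (c t) 2
      rwa [dist_eq_norm, Real.dist_eq] at this
    have h3 : |c t - 2| ≤ 1 := by
      have h4 := hcmem t
      rw [abs_of_nonneg (by linarith [h4.1])]; linarith [h4.2]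
    have h5 : (L : ℝ) * |c t - 2| ≤ L * 1 :=
      mul_le_mul_of_nonneg_left h3 L.coe_nonneg
    rw [hM]; nlinarith
  have hGlip : LipschitzWith (2 * M * L).toNNReal G := by
    apply LipschitzWith.of_dist_le_mul
    intro x y
    have hcl : |c x - c y| ≤ |x - y| := by
      have := hclip.dist_le_mul x y
      rwa [Real.dist_eq, Real.dist_eq, NNReal.coe_one, one_mul] at this
    have hγ : ‖γ (c x) - γ (c y)‖ ≤ L * |x - y| := by
      have := h₂.dist_le_mul (c x) (c y)
      rw [dist_eq_norm, Real.dist_eq] at this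
      nlinarith [L.coe_nonneg]
    have hnd : |‖γ (c x) - p‖ - ‖γ (c y) - p‖| ≤ ‖γ (c x) - γ (c y)‖ := by
      have := abs_norm_sub_norm_le (γ (c x) - p) (γ (c y) - p)
      simpa [sub_sub_sub_cancel_right] using this
    rw [Real.dist_eq, Real.dist_eq]
    have e : G x - G y = (‖γ (c x) - p‖ - ‖γ (c y) - p‖) * (‖γ (c x) - p‖ + ‖γ (c y) - p‖) := by
      rw [hG]; ring
    rw [e, abs_mul]
    have h5 : |‖γ (c x) - p‖ + ‖γ (c y) - p‖| ≤ 2 * M := by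
      rw [abs_of_nonneg (by positivity)]; linarith [hbound x, hbound y]
    have hcoe : ((2 * M * L).toNNReal : ℝ) = 2 * M * L :=
      Real.coe_toNNReal _ (by positivity)
    rw [hcoe]
    calc |‖γ (c x) - p‖ - ‖γ (c y) - p‖| * |‖γ (c x) - p‖ + ‖γ (c y) - p‖|
        ≤ ((L : ℝ) * |x - y|) * (2 * M) :=
          mul_le_mul (hnd.trans hγ) h5 (abs_nonneg _) (by positivity)
      _ = 2 * M * L * |x - y| := by ring
  have hae : ∀ᵐ t ∂(volume.restrict (Icc (2:ℝ) 3)), 0 ≤ deriv G t := by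
    have hdiff : ∀ᵐ t ∂(volume : Measure ℝ), DifferentiableAt ℝ γ t := h₂.ae_differentiableAt
    have hne : ∀ᵐ t ∂(volume : Measure ℝ), t ∉ ({2, 3} : Set ℝ) := by
      have hz : (volume : Measure ℝ) ({2, 3} : Set ℝ) = 0 :=
        Set.Finite.measure_zero ((Set.finite_singleton 3).insert 2) _
      exact measure_eq_zero_iff_ae_notMem.mp hz
    filter_upwards [hb', ae_restrict_of_ae hdiff, ae_restrict_of_ae hne,
      ae_restrict_mem measurableSet_Icc] with t h1 h2d h3 h4
    have hIoo : t ∈ Ioo (2:ℝ) 3 := by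
      simp only [Set.mem_insert_iff, Set.mem_singleton_iff, not_or] at h3
      exact ⟨lt_of_le_of_ne h4.1 (Ne.symm h3.1), lt_of_le_of_ne h4.2 h3.2⟩
    have hEq : G =ᶠ[nhds t] fun u => ‖γ u - p‖ ^ 2 := by
      filter_upwards [isOpen_Ioo.mem_nhds hIoo] with u hu
      rw [hG]; simp only; rw [hcid u ⟨hu.1.le, hu.2.le⟩]
    have hgd : HasDerivAt (fun u => ‖γ u - p‖ ^ 2)
        (2 * inner ℝ (deriv γ t) (γ t - p)) t := by
      have h5 : HasDerivAt (fun u => γ u - p) (deriv γ t) t := h2d.hasDerivAt.sub_const p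
      have h6 := HasDerivAt.inner ℝ h5 h5
      have h7 : (fun u => (inner ℝ (γ u - p) (γ u - p) : ℝ)) = fun u => ‖γ u - p‖ ^ 2 := by
        funext u; rw [real_inner_self_eq_norm_sq]
      rw [h7] at h6
      refine h6.congr_deriv ?_
      rw [real_inner_comm]; ring
    rw [hEq.deriv_eq, hgd.deriv]
    linarith [h1]
  intro x hx y hy hxy
  have hxy' := ftc_le hGlip hxy
    (ae_restrict_of_ae_restrict_of_subset (Icc_subset_Icc hx.1 hy.2) hae)
  apply norm_le_norm_of_sq_le_sq
  have gx : G x = ‖γ x - p‖ ^ 2 := by rw [hG]; simp only; rw [hcid x hx]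
  have gy : G y = ‖γ y - p‖ ^ 2 := by rw [hG]; simp only; rw [hcid y hy]
  rw [← gx, ← gy]; exact hxy'

/-- Monotonicity of the distance to `p` along the segment `q + (t-1)•v`. -/
private lemma segMono {E : Type*} [NormedAddCommGroup E] [InnerProductSpace ℝ E]
    {q v p : E} (hc : (inner ℝ v (p - q) : ℝ) ≤ 0) {x y : ℝ}
    (hx : 1 ≤ x) (hxy : x ≤ y) :
    ‖q + (x - 1) • v - p‖ ≤ ‖q + (y - 1) • v - p‖ := by
  apply norm_le_norm_of_sq_le_sq
  have e : ∀ s : ℝ, ‖q + s • v - p‖ ^ 2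
      = ‖q - p‖ ^ 2 + 2 * s * inner ℝ (q - p) v + s ^ 2 * ‖v‖ ^ 2 := by
    intro s
    have h1 : q + s • v - p = (q - p) + s • v := by abel
    rw [h1, norm_add_sq_real, real_inner_smul_right, norm_smul, Real.norm_eq_abs,
      mul_pow, sq_abs]
    ring
  rw [e, e]
  have hip : 0 ≤ (inner ℝ (q - p) v : ℝ) := by
    have h2 : (inner ℝ v (q - p) : ℝ) = - inner ℝ v (p - q) := by
      rw [show q - p = -(p - q) by abel, inner_neg_right]
    rw [real_inner_comm, h2]
    linarith
  nlinarith [mul_nonneg (sub_nonneg.2 hxy) hip,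
    mul_nonneg (mul_nonneg (sub_nonneg.2 hxy) (by linarith : (0:ℝ) ≤ x + y - 2))
      (sq_nonneg ‖v‖)]

/-- `γ` is self-distancing on `s`: distances from earlier points never decrease. -/
def SelfDistOn (γ : ℝ → EuclideanSpace ℝ (Fin 2)) (s : Set ℝ) : Prop :=
  ∀ t₁ ∈ s, ∀ t₂ ∈ s, ∀ t₃ ∈ s, t₁ ≤ t₂ → t₂ ≤ t₃ → ‖γ t₂ - γ t₁‖ ≤ ‖γ t₃ - γ t₁‖

/-- Let `γ₁ : [0,1] → ℝ²` and `γ₂ : [2,3] → ℝ²` be Lipschitz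
self-distancing curves with `x₁⁺ = γ₁(1)`, `x₂⁻ = γ₂(2)`. If (a) `x₂⁻ - x₁⁺` lies in the
normal cone at `x₁⁺` of the convex hull of `γ₁([0,1])`, and (b) for a.e. `t ∈ [2,3]` and
every `y ∈ γ₁([0,1])` one has `⟪γ₂'(t), y - γ₂(t)⟫ ≤ 0`, then the concatenation of `γ₁`,
the segment from `x₁⁺` to `x₂⁻`, and `γ₂` is a self-distancing curve on `[0,3]`. -/
theorem stmt_19 (γ₁ γ₂ : ℝ → EuclideanSpace ℝ (Fin 2)) (L₁ L₂ : NNReal)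
    (h₁ : LipschitzWith L₁ γ₁) (h₂ : LipschitzWith L₂ γ₂)
    (sd₁ : SelfDistOn γ₁ (Icc 0 1)) (sd₂ : SelfDistOn γ₂ (Icc 2 3))
    (ha : ∀ y ∈ γ₁ '' Icc (0:ℝ) 1, (inner ℝ (γ₂ 2 - γ₁ 1) (y - γ₁ 1) : ℝ) ≤ 0)
    (hb : ∀ᵐ t ∂(volume.restrict (Icc (2:ℝ) 3)),
      ∀ y ∈ γ₁ '' Icc (0:ℝ) 1, (inner ℝ (deriv γ₂ t) (y - γ₂ t) : ℝ) ≤ 0) :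
    SelfDistOn
      (fun t => if t ≤ 1 then γ₁ t
        else if t ≤ 2 then γ₁ 1 + (t - 1) • (γ₂ 2 - γ₁ 1) else γ₂ t)
      (Icc 0 3) := by
  set δ : ℝ → EuclideanSpace ℝ (Fin 2) := fun t => if t ≤ 1 then γ₁ t
      else if t ≤ 2 then γ₁ 1 + (t - 1) • (γ₂ 2 - γ₁ 1) else γ₂ t with hδ
  have hδ1 : ∀ t : ℝ, t ≤ 1 → δ t = γ₁ t := by
    intro t ht; rw [hδ]; simp only; rw [if_pos ht]
  have hδm : ∀ t : ℝ, 1 ≤ t → t ≤ 2 → δ t = γ₁ 1 + (t - 1) • (γ₂ 2 - γ₁ 1) := by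
    intro t h1 h2
    by_cases ht : t ≤ 1
    · have he : t = 1 := le_antisymm ht h1
      subst he
      rw [hδ1 1 le_rfl]; simp
    · rw [hδ]; simp only; rw [if_neg ht, if_pos h2]
  have hδ2 : ∀ t : ℝ, 2 ≤ t → δ t = γ₂ t := by
    intro t h2
    by_cases ht : t ≤ 2
    · have he : t = 2 := le_antisymm ht h2
      subst he
      rw [hδm 2 (by norm_num) le_rfl]
      module
    · rw [hδ]; simp only
      rw [if_neg (by linarith : ¬ t ≤ 1), if_neg ht]
  have hq_mem : γ₁ 1 ∈ γ₁ '' Icc (0:ℝ) 1 := ⟨1, ⟨zero_le_one, le_rfl⟩, rfl⟩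
  have hb' : ∀ p ∈ γ₁ '' Icc (0:ℝ) 1, ∀ᵐ t ∂(volume.restrict (Icc (2:ℝ) 3)),
      (0:ℝ) ≤ inner ℝ (deriv γ₂ t) (γ₂ t - p) := by
    intro p hp
    filter_upwards [hb] with t ht
    have h0 := ht p hp
    have he : (inner ℝ (deriv γ₂ t) (γ₂ t - p) : ℝ) = - inner ℝ (deriv γ₂ t) (p - γ₂ t) := by
      rw [show γ₂ t - p = -(p - γ₂ t) by abel, inner_neg_right]
    rw [he]; linarith
  have lemA' : ∀ p ∈ γ₁ '' Icc (0:ℝ) 1, ∀ x ∈ Icc (2:ℝ) 3, ∀ y ∈ Icc (2:ℝ) 3, x ≤ y →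
      ‖γ₂ x - p‖ ≤ ‖γ₂ y - p‖ := fun p hp => lemA h₂ p (hb' p hp)
  intro t₁ ht₁ t₂ ht₂ t₃ ht₃ h12 h23
  suffices H : MonotoneOn (fun t => ‖δ t - δ t₁‖) (Icc t₁ 3) by
    exact H ⟨h12, ht₂.2⟩ ⟨h12.trans h23, ht₃.2⟩ h23
  rcases le_or_gt t₁ 1 with hA | hA
  · -- t₁ ∈ [0,1]
    have hp : δ t₁ = γ₁ t₁ := hδ1 t₁ hA
    have hpmem : γ₁ t₁ ∈ γ₁ '' Icc (0:ℝ) 1 := ⟨t₁, ⟨ht₁.1, hA⟩, rfl⟩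
    have m1 : MonotoneOn (fun t => ‖δ t - δ t₁‖) (Icc t₁ 1) := by
      intro x hx y hy hxy
      show ‖δ x - δ t₁‖ ≤ ‖δ y - δ t₁‖
      rw [hp, hδ1 x hx.2, hδ1 y hy.2]
      exact sd₁ t₁ ⟨ht₁.1, hA⟩ x ⟨ht₁.1.trans hx.1, hx.2⟩ y ⟨ht₁.1.trans (hx.1.trans hxy), hy.2⟩
        hx.1 hxy
    have m2 : MonotoneOn (fun t => ‖δ t - δ t₁‖) (Icc 1 2) := by
      intro x hx y hy hxy
      show ‖δ x - δ t₁‖ ≤ ‖δ y - δ t₁‖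
      rw [hp, hδm x hx.1 hx.2, hδm y hy.1 hy.2]
      exact segMono (ha (γ₁ t₁) hpmem) hx.1 hxy
    have m3 : MonotoneOn (fun t => ‖δ t - δ t₁‖) (Icc 2 3) := by
      intro x hx y hy hxy
      show ‖δ x - δ t₁‖ ≤ ‖δ y - δ t₁‖
      rw [hp, hδ2 x hx.1, hδ2 y hy.1]
      exact lemA' (γ₁ t₁) hpmem x hx y hy hxy
    exact mono_stitch (hA.trans one_le_two) (by norm_num)
      (mono_stitch hA one_le_two m1 m2) m3
  rcases le_or_gt t₁ 2 with hB | hB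
  · -- t₁ ∈ (1,2]
    have hp : δ t₁ = γ₁ 1 + (t₁ - 1) • (γ₂ 2 - γ₁ 1) := hδm t₁ hA.le hB
    have hs0 : (0:ℝ) ≤ t₁ - 1 := by linarith
    have hs1 : t₁ - 1 ≤ 1 := by linarith
    have m2 : MonotoneOn (fun t => ‖δ t - δ t₁‖) (Icc t₁ 2) := by
      intro x hx y hy hxy
      show ‖δ x - δ t₁‖ ≤ ‖δ y - δ t₁‖
      rw [hp, hδm x (hA.le.trans hx.1) hx.2, hδm y (hA.le.trans hy.1) hy.2]
      have ex : ∀ u : ℝ, γ₁ 1 + (u - 1) • (γ₂ 2 - γ₁ 1) - (γ₁ 1 + (t₁ - 1) • (γ₂ 2 - γ₁ 1))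
          = (u - t₁) • (γ₂ 2 - γ₁ 1) := by
        intro u
        module
      rw [ex x, ex y, norm_smul, norm_smul, Real.norm_eq_abs, Real.norm_eq_abs]
      have hxx : |x - t₁| ≤ |y - t₁| := by
        rw [abs_of_nonneg (by linarith [hx.1]), abs_of_nonneg (by linarith [hx.1, hxy])]
        linarith
      exact mul_le_mul_of_nonneg_right hxx (norm_nonneg _)
    have m3 : MonotoneOn (fun t => ‖δ t - δ t₁‖) (Icc 2 3) := by
      intro x hx y hy hxy
      show ‖δ x - δ t₁‖ ≤ ‖δ y - δ t₁‖
      rw [hp, hδ2 x hx.1, hδ2 y hy.1]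
      apply norm_le_norm_of_sq_le_sq
      set s : ℝ := t₁ - 1 with hsdef
      have ex : ∀ u : ℝ, ‖γ₂ u - (γ₁ 1 + s • (γ₂ 2 - γ₁ 1))‖ ^ 2
          = (1 - s) * ‖γ₂ u - γ₁ 1‖ ^ 2 + s * ‖γ₂ u - γ₂ 2‖ ^ 2 + s * (s - 1) * ‖γ₂ 2 - γ₁ 1‖ ^ 2 := by
        intro u
        have h1 : γ₂ u - (γ₁ 1 + s • (γ₂ 2 - γ₁ 1))
            = (γ₂ u - γ₁ 1) - s • (γ₂ 2 - γ₁ 1) := by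
          module
        have h2 : γ₂ u - γ₂ 2 = (γ₂ u - γ₁ 1) - (γ₂ 2 - γ₁ 1) := by abel
        have e1 : ‖γ₂ u - (γ₁ 1 + s • (γ₂ 2 - γ₁ 1))‖ ^ 2
            = ‖γ₂ u - γ₁ 1‖ ^ 2 - 2 * (s * inner ℝ (γ₂ u - γ₁ 1) (γ₂ 2 - γ₁ 1))
              + s ^ 2 * ‖γ₂ 2 - γ₁ 1‖ ^ 2 := by
          rw [h1, norm_sub_sq_real, real_inner_smul_right, norm_smul, Real.norm_eq_abs,
            mul_pow, sq_abs]
        have e2 : ‖γ₂ u - γ₂ 2‖ ^ 2 = ‖γ₂ u - γ₁ 1‖ ^ 2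
            - 2 * inner ℝ (γ₂ u - γ₁ 1) (γ₂ 2 - γ₁ 1) + ‖γ₂ 2 - γ₁ 1‖ ^ 2 := by
          rw [h2, norm_sub_sq_real]
        rw [e1, e2]
        ring
      rw [ex x, ex y]
      have hA2 : ‖γ₂ x - γ₁ 1‖ ^ 2 ≤ ‖γ₂ y - γ₁ 1‖ ^ 2 := by
        have := lemA' (γ₁ 1) hq_mem x hx y hy hxy
        nlinarith [norm_nonneg (γ₂ x - γ₁ 1)]
      have hB2 : ‖γ₂ x - γ₂ 2‖ ^ 2 ≤ ‖γ₂ y - γ₂ 2‖ ^ 2 := by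
        have := sd₂ 2 ⟨le_rfl, by norm_num⟩ x hx y hy hx.1 hxy
        nlinarith [norm_nonneg (γ₂ x - γ₂ 2)]
      nlinarith [mul_nonneg (by linarith : (0:ℝ) ≤ 1 - s) (sub_nonneg.2 hA2),
        mul_nonneg (by linarith : (0:ℝ) ≤ s) (sub_nonneg.2 hB2)]
    exact mono_stitch hB (by norm_num) m2 m3
  · -- t₁ ∈ (2,3]
    intro x hx y hy hxy
    show ‖δ x - δ t₁‖ ≤ ‖δ y - δ t₁‖
    rw [hδ2 t₁ hB.le, hδ2 x (hB.le.trans hx.1), hδ2 y (hB.le.trans hy.1)]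
    exact sd₂ t₁ ⟨hB.le, ht₁.2⟩ x ⟨hB.le.trans hx.1, hx.2⟩ y ⟨hB.le.trans (hx.1.trans hxy), hy.2⟩
      hx.1 hxy
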